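/- Let G be a connected multigraph and γ the edge-subgraph spanned by S ⊆ E(G). Then the monomials of minimal degree in the variables {x_e : e ∈ S} appearing in ψ_G have degree exactly equal to the first Betti number |γ| of γ, provided γ contains at least one spanning forest that extends to a spanning tree of G; equivalently, min over spanning trees T of G of |S ∖ T| equals |γ|. -/

import Mathlib

open MvPolynomial

structure MGraph (V E : Type) where
  ends : E → Sym2 V

namespace MGraph

variable {V E : Type} (G : MGraph V E)

def adj (S : Set E) (u v : V) : Prop := ∃ e ∈ S, G.ends e = s(u, v)

def conn (S : Set E) (u v : V) : Prop := Relation.ReflTransGen (G.adj S) u v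

def Connected : Prop := ∀ u v : V, G.conn Set.univ u v

def IsForest (S : Set E) : Prop :=
  ∀ e ∈ S, ∀ u v : V, G.ends e = s(u, v) → ¬ G.conn (S \ {e}) u v

def IsSpanningTree (T : Set E) : Prop := G.IsForest T ∧ ∀ u v : V, G.conn T u v

def IsSpanningForestOf (S T : Set E) : Prop :=
  T ⊆ S ∧ G.IsForest T ∧ ∀ u v : V, G.conn S u v → G.conn T u v

noncomputable def psi : MvPolynomial E ℝ :=
  ∑ᶠ T ∈ {T : Set E | G.IsSpanningTree T}, ∏ᶠ e ∈ Tᶜ, (X e : MvPolynomial E ℝ)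

noncomputable def psiSub (S : Set E) : MvPolynomial E ℝ :=
  ∑ᶠ T ∈ {T : Set E | G.IsSpanningForestOf S T}, ∏ᶠ e ∈ S \ T, (X e : MvPolynomial E ℝ)

noncomputable def ncomp (S : Set E) : ℕ := Nat.card (Quot (G.adj S))

noncomputable def betti (S : Set E) : ℤ :=
  (Nat.card S : ℤ) - (Nat.card V : ℤ) + (G.ncomp S : ℤ)

noncomputable def rank : ℤ := G.betti Set.univ

def IsCore (S : Set E) : Prop := ∀ e ∈ S, G.betti (S \ {e}) < G.betti S

noncomputable def contract (S : Set E) : MGraph (Quot (G.adj S)) ↥(Sᶜ) :=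
  ⟨fun e => (G.ends e.1).map (Quot.mk (G.adj S))⟩

open Classical in
noncomputable def deg (v : V) : ℕ :=
  ∑ᶠ e : E, if G.ends e = s(v, v) then 2 else if v ∈ G.ends e then 1 else 0

noncomputable def sdd (d : ℤ) (S : Set E) : ℤ :=
  d * G.betti S - 2 * (Nat.card S : ℤ)

end MGraph

namespace MGraph

variable {V E : Type} {G : MGraph V E}

lemma adj_symm {S : Set E} : Symmetric (G.adj S) := by
  rintro u v ⟨e, he, hev⟩
  exact ⟨e, he, by rwa [Sym2.eq_swap]⟩

lemma conn_symm {S : Set E} : Symmetric (G.conn S) :=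
  fun _ _ h => by
    induction h with
    | refl => exact Relation.ReflTransGen.refl
    | tail _ hbc ih => exact Relation.ReflTransGen.head (adj_symm hbc) ih

lemma conn_mono {S S' : Set E} (h : S ⊆ S') {u v : V} (huv : G.conn S u v) :
    G.conn S' u v :=
  by
    have key : ∀ a b, G.adj S a b → G.adj S' a b := fun _ _ ⟨e, he, hev⟩ => ⟨e, h he, hev⟩
    induction huv with
    | refl => exact Relation.ReflTransGen.refl
    | tail _ hbc ih => exact ih.tail (key _ _ hbc)

lemma quot_mk_eq_iff {S : Set E} {u v : V} :
    Quot.mk (G.adj S) u = Quot.mk (G.adj S) v ↔ G.conn S u v := by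
  rw [Quot.eq]
  constructor
  · intro h
    induction h with
    | rel a b hab => exact Relation.ReflTransGen.single hab
    | refl => exact Relation.ReflTransGen.refl
    | symm a b _ ih => exact conn_symm ih
    | trans a b c _ _ ih1 ih2 => exact ih1.trans ih2
  · intro h
    induction h with
    | refl => exact Relation.EqvGen.refl _
    | tail _ hbc ih => exact ih.trans _ _ _ (Relation.EqvGen.rel _ _ hbc)

instance quotFinite [Finite V] (S : Set E) : Finite (Quot (G.adj S)) :=
  Finite.of_surjective (Quot.mk _) (fun q => Quot.exists_rep q)

lemma ncomp_le_of_subset [Finite V] {S S' : Set E} (h : S ⊆ S') :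
    G.ncomp S' ≤ G.ncomp S := by
  apply Nat.card_le_card_of_surjective
    (Quot.lift (Quot.mk (G.adj S')) (fun a b hab => Quot.sound ⟨hab.choose,
      h hab.choose_spec.1, hab.choose_spec.2⟩))
  intro q
  obtain ⟨x, rfl⟩ := Quot.exists_rep q
  exact ⟨Quot.mk _ x, rfl⟩

lemma ncomp_le_of_conn [Finite V] {S S' : Set E}
    (h : ∀ u v : V, G.conn S u v → G.conn S' u v) : G.ncomp S' ≤ G.ncomp S := by
  apply Nat.card_le_card_of_surjective
    (Quot.lift (Quot.mk (G.adj S'))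
      (fun a b hab => quot_mk_eq_iff.2 (h a b (Relation.ReflTransGen.single hab))))
  intro q
  obtain ⟨x, rfl⟩ := Quot.exists_rep q
  exact ⟨Quot.mk _ x, rfl⟩

lemma IsForest.mono {S T : Set E} (hT : G.IsForest T) (h : S ⊆ T) : G.IsForest S := by
  intro e he u v hev hc
  exact hT e (h he) u v hev (conn_mono (Set.diff_subset_diff_left h) hc)

/-- Path decomposition after removing one edge. -/
lemma conn_decomp {F : Set E} {e : E} (he : e ∈ F) {u v a b : V}
    (huv : G.ends e = s(u, v)) :
    G.conn F a b ↔ G.conn (F \ {e}) a b ∨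
      (G.conn (F \ {e}) a u ∧ G.conn (F \ {e}) v b) ∨
      (G.conn (F \ {e}) a v ∧ G.conn (F \ {e}) u b) := by
  constructor
  · intro h
    induction h with
    | refl => exact Or.inl Relation.ReflTransGen.refl
    | tail _ hbc ih =>
      rename_i x y _
      obtain ⟨f, hf, hfe⟩ := hbc
      by_cases hfe' : f = e
      · subst hfe'
        rw [huv] at hfe
        rcases Sym2.eq_iff.1 hfe.symm with ⟨rfl, rfl⟩ | ⟨rfl, rfl⟩
        · -- step from u to v
          rcases ih with h1 | ⟨h2, h3⟩ | ⟨h4, h5⟩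
          · exact Or.inr (Or.inl ⟨h1, Relation.ReflTransGen.refl⟩)
          · exact Or.inl (h2.trans (conn_symm h3))
          · exact Or.inl h4
        · -- step from v to u
          rcases ih with h1 | ⟨h2, h3⟩ | ⟨h4, h5⟩
          · exact Or.inr (Or.inr ⟨h1, Relation.ReflTransGen.refl⟩)
          · exact Or.inl h2
          · exact Or.inl (h4.trans (conn_symm h5))
      · have hstep : G.adj (F \ {e}) x y := ⟨f, ⟨hf, hfe'⟩, hfe⟩
        rcases ih with h1 | ⟨h2, h3⟩ | ⟨h4, h5⟩
        · exact Or.inl (h1.tail hstep)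
        · exact Or.inr (Or.inl ⟨h2, h3.tail hstep⟩)
        · exact Or.inr (Or.inr ⟨h4, h5.tail hstep⟩)
  · have hm : ∀ x y : V, G.conn (F \ {e}) x y → G.conn F x y :=
      fun x y => conn_mono Set.diff_subset
    have heuv : G.conn F u v := Relation.ReflTransGen.single ⟨e, he, huv⟩
    rintro (h1 | ⟨h2, h3⟩ | ⟨h4, h5⟩)
    · exact hm _ _ h1
    · exact ((hm _ _ h2).trans heuv).trans (hm _ _ h3)
    · exact ((hm _ _ h4).trans (conn_symm heuv)).trans (hm _ _ h5)

lemma ncomp_diff_singleton [Finite V] {F : Set E} {e : E} (hF : G.IsForest F)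
    (he : e ∈ F) : G.ncomp (F \ {e}) = G.ncomp F + 1 := by
  have hsym2 : ∀ z : Sym2 V, ∃ u v : V, z = s(u, v) := by
    intro z
    induction z using Sym2.ind with
    | _ x y => exact ⟨x, y, rfl⟩
  obtain ⟨u, v, huv⟩ := hsym2 (G.ends e)
  classical
  set F' := F \ {e} with hF'
  have hnuv : ¬ G.conn F' u v := hF e he u v huv
  set av : Quot (G.adj F') := Quot.mk _ v with hav
  -- the map down to Quot (G.adj F)
  set q : Quot (G.adj F') → Quot (G.adj F) :=
    Quot.lift (Quot.mk (G.adj F)) (fun a b hab => Quot.sound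
      ⟨hab.choose, (hab.choose_spec.1).1, hab.choose_spec.2⟩) with hq
  have hqmk : ∀ x : V, q (Quot.mk _ x) = Quot.mk _ x := fun x => rfl
  -- bijection from {x // x ≠ av} to Quot (G.adj F)
  have hbij : Function.Bijective (fun x : {x : Quot (G.adj F') // x ≠ av} => q x.1) := by
    constructor
    · rintro ⟨x, hx⟩ ⟨y, hy⟩ hxy
      obtain ⟨a, rfl⟩ := Quot.exists_rep x
      obtain ⟨b, rfl⟩ := Quot.exists_rep y
      have hxv : ¬ G.conn F' a v := fun h => hx (quot_mk_eq_iff.2 h)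
      have hyv : ¬ G.conn F' b v := fun h => hy (quot_mk_eq_iff.2 h)
      have hab : G.conn F a b := quot_mk_eq_iff.1 hxy
      rcases (conn_decomp he huv).1 hab with h1 | ⟨h2, h3⟩ | ⟨h4, h5⟩
      · exact Subtype.ext (quot_mk_eq_iff.2 h1)
      · exact absurd (conn_symm h3) hyv
      · exact absurd h4 hxv
    · intro y
      obtain ⟨w, rfl⟩ := Quot.exists_rep y
      by_cases hw : G.conn F' w v
      · refine ⟨⟨Quot.mk _ u, fun h => hnuv (quot_mk_eq_iff.1 h)⟩, ?_⟩
        show Quot.mk (G.adj F) u = Quot.mk (G.adj F) w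
        refine quot_mk_eq_iff.2 ?_
        have h1 : G.conn F u v := Relation.ReflTransGen.single ⟨e, he, huv⟩
        exact h1.trans (conn_mono Set.diff_subset (conn_symm hw))
      · exact ⟨⟨Quot.mk _ w, fun h => hw (quot_mk_eq_iff.1 h)⟩, rfl⟩
  have hcard1 : Nat.card {x : Quot (G.adj F') // x ≠ av} = G.ncomp F :=
    Nat.card_eq_of_bijective _ hbij
  have hsplit : Nat.card (Quot (G.adj F')) =
      Nat.card {x : Quot (G.adj F') // x = av} +
      Nat.card {x : Quot (G.adj F') // ¬ x = av} := by
    rw [← Nat.card_sum]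
    exact Nat.card_congr (Equiv.sumCompl (fun x => x = av)).symm
  have hone : Nat.card {x : Quot (G.adj F') // x = av} = 1 := by
    have : Unique {x : Quot (G.adj F') // x = av} :=
      ⟨⟨⟨av, rfl⟩⟩, fun x => Subtype.ext x.2⟩
    exact Nat.card_unique
  show Nat.card (Quot (G.adj F')) = G.ncomp F + 1
  rw [hsplit, hone, hcard1]
  omega

lemma ncomp_empty [Finite V] : G.ncomp (∅ : Set E) = Nat.card V := by
  refine (Nat.card_eq_of_bijective (fun v : V => Quot.mk (G.adj ∅) v) ⟨?_, ?_⟩).symm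
  · intro a b hab
    have h := quot_mk_eq_iff.1 hab
    induction h with
    | refl => rfl
    | tail _ hbc _ => exact absurd hbc.choose_spec.1 (Set.notMem_empty _)
  · exact fun q => Quot.exists_rep q

lemma card_eq_zero_iff_empty [Finite E] {F : Set E} : Nat.card F = 0 ↔ F = ∅ := by
  rw [Nat.card_coe_set_eq, Set.ncard_eq_zero (Set.toFinite F)]

lemma forest_card [Finite V] [Finite E] {F : Set E} (hF : G.IsForest F) :
    Nat.card F + G.ncomp F = Nat.card V := by
  generalize hn : Nat.card F = n
  induction n generalizing F with
  | zero =>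
    have : F = ∅ := card_eq_zero_iff_empty.1 hn
    subst this
    rw [ncomp_empty]
    omega
  | succ n ih =>
    have hne : F.Nonempty := by
      rw [Set.nonempty_iff_ne_empty]
      rintro rfl
      simp [Nat.card_coe_set_eq] at hn
    obtain ⟨e, he⟩ := hne
    have hF' : G.IsForest (F \ {e}) := hF.mono Set.diff_subset
    have hcard : Nat.card ↥(F \ {e}) = n := by
      have h1 := Set.ncard_diff_singleton_add_one he (Set.toFinite F)
      rw [Nat.card_coe_set_eq] at hn ⊢
      omega
    have := ih hF' hcard
    rw [ncomp_diff_singleton hF he] at this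
    omega

lemma ncomp_eq_of_spanning_forest [Finite V] {S F : Set E}
    (h : G.IsSpanningForestOf S F) : G.ncomp F = G.ncomp S :=
  le_antisymm (ncomp_le_of_conn h.2.2) (ncomp_le_of_subset h.1)

end MGraph

open MGraph in
/-- the minimal degree in the variables of S ⊆ E(G) of a monomial
of ψ_G, i.e. the minimum of |S ∖ T| over spanning trees T of G, equals the first
Betti number of the subgraph γ spanned by S, provided some maximal spanning
forest of γ extends to a spanning tree of G. -/
theorem min_degree_in_subgraph_vars {V E : Type} [Finite V] [Finite E]
    (G : MGraph V E) (hG : G.Connected) (S : Set E)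
    (hext : ∃ F T : Set E, G.IsSpanningForestOf S F ∧ G.IsSpanningTree T ∧ F ⊆ T) :
    (∀ T : Set E, G.IsSpanningTree T → G.betti S ≤ (Nat.card ↥(S \ T) : ℤ)) ∧
    (∃ T : Set E, G.IsSpanningTree T ∧ (Nat.card ↥(S \ T) : ℤ) = G.betti S) := by
  obtain ⟨F, T0, hF, hT0, hFT0⟩ := hext
  have hVcard : ∀ T : Set E, G.IsSpanningTree T →
      (T ∩ S).ncard + G.ncomp (T ∩ S) = Nat.card V := by
    intro T hT
    have := forest_card (F := T ∩ S) (hT.1.mono Set.inter_subset_left)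
    rwa [Nat.card_coe_set_eq] at this
  have hsplit : ∀ T : Set E, (T ∩ S).ncard + (S \ T).ncard = S.ncard := by
    intro T
    rw [Set.inter_comm]
    exact Set.ncard_inter_add_ncard_diff_eq_ncard S T (Set.toFinite S)
  constructor
  · intro T hT
    have h1 := hVcard T hT
    have h2 : G.ncomp S ≤ G.ncomp (T ∩ S) := ncomp_le_of_subset Set.inter_subset_right
    have h3 := hsplit T
    unfold MGraph.betti
    rw [Nat.card_coe_set_eq, Nat.card_coe_set_eq]
    omega
  · refine ⟨T0, hT0, ?_⟩
    have h1 := hVcard T0 hT0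
    have h3 := hsplit T0
    have hFc : (F : Set E).ncard + G.ncomp F = Nat.card V := by
      have := forest_card hF.2.1
      rwa [Nat.card_coe_set_eq] at this
    have hncF : G.ncomp F = G.ncomp S := ncomp_eq_of_spanning_forest hF
    have hsub : F ⊆ T0 ∩ S := Set.subset_inter hFT0 hF.1
    have h2 : G.ncomp S ≤ G.ncomp (T0 ∩ S) := ncomp_le_of_subset Set.inter_subset_right
    have h4 : G.ncomp (T0 ∩ S) ≤ G.ncomp F := ncomp_le_of_subset hsub
    unfold MGraph.betti
    rw [Nat.card_coe_set_eq, Nat.card_coe_set_eq]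
    omega
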